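/- arXiv:1801.08800 — 4 statements merged into one kernel-verified Lean document; each statement's English description precedes it below -/
import Mathlib

section
/- The parallel sum of two Hermitian positive semi-definite matrices is Hermitian positive semi-definite. That is, if A and B are Hermitian positive semi-definite complex n×n matrices, then B(A+B)†A (with † the Moore–Penrose pseudoinverse) is Hermitian positive semi-definite. -/
open Matrix
open scoped ComplexOrder

private lemma psd_add_eq_zero {n : ℕ} {M N : Matrix (Fin n) (Fin n) ℂ}
    (hM : M.PosSemidef) (hN : N.PosSemidef) (h : M + N = 0) : M = 0 := by
  have key : ∀ x : Fin n → ℂ, M *ᵥ x = 0 := by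
    intro x
    have h1 := hM.dotProduct_mulVec_nonneg x
    have h2 := hN.dotProduct_mulVec_nonneg x
    have hsum : star x ⬝ᵥ M *ᵥ x + star x ⬝ᵥ N *ᵥ x = 0 := by
      rw [← dotProduct_add, ← add_mulVec, h, zero_mulVec, dotProduct_zero]
    have hz : star x ⬝ᵥ M *ᵥ x = 0 := le_antisymm (by rw [← hsum]; simpa using h2) h1
    exact (hM.dotProduct_mulVec_zero_iff x).mp hz
  ext i j
  have := congrFun (key (Pi.single j 1)) i
  simpa [mulVec, dotProduct, Pi.single_apply] using this

/-- The parallel sum `B (A+B)† A` of two Hermitian positive semi-definite matrices is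
Hermitian positive semi-definite. The Moore–Penrose pseudoinverse `(A+B)†` is characterized
by the four Penrose conditions, which we take as hypotheses on `X`. -/
theorem parallel_sum_posSemidef {n : ℕ} (A B X : Matrix (Fin n) (Fin n) ℂ)
    (hA : A.PosSemidef) (hB : B.PosSemidef)
    (h1 : (A + B) * X * (A + B) = A + B)
    (h2 : X * (A + B) * X = X)
    (h3 : ((A + B) * X)ᴴ = (A + B) * X)
    (h4 : (X * (A + B))ᴴ = X * (A + B)) :
    (B * X * A).PosSemidef := by
  set S := A + B with hS
  -- Q = S * X is Hermitian with Q * S = S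
  set Q : Matrix (Fin n) (Fin n) ℂ := S * X with hQ
  have hSH : Sᴴ = S := (hA.1.add hB.1).eq
  have hQH : Qᴴ = Q := h3
  have hXhS : Xᴴ * S = Q := by
    have := h3
    rw [conjTranspose_mul, hSH] at this
    exact this
  have hQS : Q * S = S := h1
  -- (1 - Q) * S * (1 - Q)ᴴ = 0
  have hkey : (1 - Q) * S * (1 - Q)ᴴ = 0 := by
    have : (1 - Q) * S = 0 := by
      rw [sub_mul, one_mul, hQS, sub_self]
    rw [this, zero_mul]
  have hsplit : (1 - Q) * A * (1 - Q)ᴴ + (1 - Q) * B * (1 - Q)ᴴ = 0 := by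
    calc (1 - Q) * A * (1 - Q)ᴴ + (1 - Q) * B * (1 - Q)ᴴ
        = (1 - Q) * (A + B) * (1 - Q)ᴴ := by noncomm_ring
      _ = 0 := hkey
  have hAQ' : (1 - Q) * A * (1 - Q)ᴴ = 0 :=
    psd_add_eq_zero (hA.mul_mul_conjTranspose_same _) (hB.mul_mul_conjTranspose_same _) hsplit
  -- deduce A * Q = A
  obtain ⟨C, hCA, hCH⟩ : ∃ C : Matrix (Fin n) (Fin n) ℂ, C * C = A ∧ C.PosSemidef :=
    open scoped MatrixOrder in
    ⟨CFC.sqrt A, CFC.sqrt_mul_sqrt_self A (nonneg_iff_posSemidef.mpr hA),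
      nonneg_iff_posSemidef.mp (CFC.sqrt_nonneg A)⟩
  have hD : C * (1 - Q)ᴴ = 0 := by
    have hz : ((C * (1 - Q)ᴴ))ᴴ * (C * (1 - Q)ᴴ) = 0 := by
      rw [conjTranspose_mul, conjTranspose_conjTranspose, hCH.1.eq]
      calc (1 - Q) * C * (C * (1 - Q)ᴴ)
          = (1 - Q) * (C * C) * (1 - Q)ᴴ := by noncomm_ring
        _ = 0 := by rw [hCA]; exact hAQ'
    exact conjTranspose_mul_self_eq_zero.mp hz
  have hAQ : A * Q = A := by
    have hz : A * (1 - Q)ᴴ = 0 := by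
      calc A * (1 - Q)ᴴ = C * (C * (1 - Q)ᴴ) := by rw [← mul_assoc, hCA]
        _ = 0 := by rw [hD, mul_zero]
    rw [conjTranspose_sub, conjTranspose_one, hQH, mul_sub, mul_one, sub_eq_zero] at hz
    exact hz.symm
  have hQA : Q * A = A := by
    have := congrArg conjTranspose hAQ
    rwa [conjTranspose_mul, hQH, hA.1.eq] at this
  -- key identities
  have E3 : S * (X * A) = A := by rw [← mul_assoc, ← hQ]; exact hQA
  have E2 : A * Xᴴ * S = A := by rw [mul_assoc, hXhS, hAQ]
  have E1 : A * Xᴴ * A = A * X * A := by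
    calc A * Xᴴ * A = A * Xᴴ * (S * (X * A)) := by rw [E3]
      _ = (A * Xᴴ * S) * (X * A) := by noncomm_ring
      _ = A * (X * A) := by rw [E2]
      _ = A * X * A := by rw [mul_assoc]
  -- the decomposition
  have hBSA : B = S - A := by rw [hS]; abel
  have main : (1 - X * A)ᴴ * A * (1 - X * A) + (X * A)ᴴ * B * (X * A) = B * X * A := by
    rw [conjTranspose_sub, conjTranspose_one, conjTranspose_mul, hA.1.eq, hBSA]
    calc (1 - A * Xᴴ) * A * (1 - X * A) + A * Xᴴ * (S - A) * (X * A)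
        = A - A * (X * A) - A * Xᴴ * A + (A * Xᴴ * A) * (X * A)
            + (A * Xᴴ * S) * (X * A) - (A * Xᴴ * A) * (X * A) := by noncomm_ring
      _ = A - A * (X * A) - A * X * A + (A * X * A) * (X * A)
            + A * (X * A) - (A * X * A) * (X * A) := by rw [E1, E2]
      _ = S * (X * A) - A * X * A := by
            rw [E3]; noncomm_ring
      _ = (S - A) * X * A := by noncomm_ring
  rw [← main]
  exact (hA.conjTranspose_mul_mul_same _).add (hB.conjTranspose_mul_mul_same _)
end

section
/- The parallel sum of two Hermitian positive semi-definite matrices is dominated by each summand in the Loewner order: if A, B are Hermitian positive semi-definite n×n complex matrices, then A : B ≤ A and A : B ≤ B, i.e., for every vector v, v^H (A:B) v ≤ v^H A v and v^H (A:B) v ≤ v^H B v. -/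
open Matrix
open scoped ComplexOrder

open scoped MatrixOrder in
private lemma psd_sandwich_zero {n : ℕ} {P M : Matrix (Fin n) (Fin n) ℂ}
    (hM : M.PosSemidef) (h : P * M * Pᴴ = 0) : P * M = 0 := by
  have hC : (CFC.sqrt M) * (CFC.sqrt M) = M := CFC.sqrt_mul_sqrt_self M hM.nonneg
  have hCh : (CFC.sqrt M).IsHermitian := (CFC.sqrt_nonneg M).posSemidef.1
  have key : (P * (CFC.sqrt M)) * (P * (CFC.sqrt M))ᴴ = 0 := by
    rw [conjTranspose_mul, hCh.eq]
    calc P * (CFC.sqrt M) * ((CFC.sqrt M) * Pᴴ) = P * ((CFC.sqrt M) * (CFC.sqrt M)) * Pᴴ := by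
          simp only [mul_assoc]
      _ = 0 := by rw [hC, h]
  have hPC : P * (CFC.sqrt M) = 0 := self_mul_conjTranspose_eq_zero.mp key
  calc P * M = (P * (CFC.sqrt M)) * (CFC.sqrt M) := by rw [mul_assoc, hC]
    _ = 0 := by rw [hPC, zero_mul]

/-- The parallel sum `A : B = B (A+B)† A` of two Hermitian positive semi-definite matrices is
dominated by each summand in the Loewner order. `X` denotes the Moore–Penrose pseudoinverse of
`A + B`, characterized by the four Penrose conditions. -/
theorem parallel_sum_le_summands {n : ℕ} (A B X : Matrix (Fin n) (Fin n) ℂ)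
    (hA : A.PosSemidef) (hB : B.PosSemidef)
    (h1 : (A + B) * X * (A + B) = A + B)
    (h2 : X * (A + B) * X = X)
    (h3 : ((A + B) * X)ᴴ = (A + B) * X)
    (h4 : (X * (A + B))ᴴ = X * (A + B)) :
    (A - B * X * A).PosSemidef ∧ (B - B * X * A).PosSemidef := by
  set S := A + B with hSdef
  have hS : S.PosSemidef := hA.add hB
  have hSh : Sᴴ = S := hS.1
  -- basic consequences of the Penrose conditions
  have d3 : Xᴴ * S = S * X := by rw [← h3, conjTranspose_mul, hSh]
  have d4 : S * Xᴴ = X * S := by rw [← h4, conjTranspose_mul, hSh]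
  have e1' : S * Xᴴ * S = S := by
    have := congrArg conjTranspose h1
    simpa only [conjTranspose_mul, hSh, ← mul_assoc] using this
  -- S and X commute
  have comm : S * X = X * S := by
    have l1 : S * X = (X * S) * (S * X) := by
      calc S * X = (S * Xᴴ * S) * X := by rw [e1']
        _ = (S * Xᴴ) * (S * X) := by rw [mul_assoc]
        _ = (X * S) * (S * X) := by rw [d4]
    have l2 : X * S = (X * S) * (S * X) := by
      calc X * S = X * (S * Xᴴ * S) := by rw [e1']
        _ = (X * S) * (Xᴴ * S) := by simp only [mul_assoc]
        _ = (X * S) * (S * X) := by rw [d3]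
    rw [l1, ← l2]
  -- X is Hermitian
  have hXh : Xᴴ = X := by
    have e2' : Xᴴ * S * Xᴴ = Xᴴ := by
      have := congrArg conjTranspose h2
      simpa only [conjTranspose_mul, hSh, ← mul_assoc] using this
    calc Xᴴ = Xᴴ * S * Xᴴ := e2'.symm
      _ = Xᴴ * (S * Xᴴ) := by rw [mul_assoc]
      _ = Xᴴ * (X * S) := by rw [d4]
      _ = Xᴴ * (S * X) := by rw [comm]
      _ = (Xᴴ * S) * X := by rw [mul_assoc]
      _ = (S * X) * X := by rw [d3]
      _ = (X * S) * X := by rw [comm]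
      _ = X := h2
  -- X is positive semidefinite
  have hXpsd : X.PosSemidef := by
    have := hS.conjTranspose_mul_mul_same X
    rwa [hXh, h2] at this
  -- the projection P = 1 - S X kills A and B
  set P : Matrix (Fin n) (Fin n) ℂ := 1 - S * X with hPdef
  have hPS : P * S = 0 := by
    rw [hPdef, sub_mul, one_mul, mul_assoc, ← mul_assoc S X S, h1, sub_self]
  have hPh : Pᴴ = P := by
    rw [hPdef, conjTranspose_sub, conjTranspose_one, h3]
  have hsum0 : P * A * Pᴴ + P * B * Pᴴ = 0 := by
    have : P * A * Pᴴ + P * B * Pᴴ = P * S * Pᴴ := by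
      rw [hSdef, mul_add, add_mul]
    rw [this, hPS, zero_mul]
  have hPA : P * A = 0 :=
    psd_sandwich_zero hA (psd_add_eq_zero (hA.mul_mul_conjTranspose_same P)
      (hB.mul_mul_conjTranspose_same P) hsum0)
  have hPB : P * B = 0 := by
    refine psd_sandwich_zero hB ?_
    have := psd_add_eq_zero (hB.mul_mul_conjTranspose_same P)
      (hA.mul_mul_conjTranspose_same P) (by rwa [add_comm] at hsum0)
    exact this
  have hSXA : S * X * A = A := by
    have : (1 - S * X) * A = 0 := hPA
    rw [sub_mul, one_mul, sub_eq_zero] at this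
    rw [mul_assoc] at this ⊢
    exact this.symm
  have hSXB : S * X * B = B := by
    have : (1 - S * X) * B = 0 := hPB
    rw [sub_mul, one_mul, sub_eq_zero] at this
    rw [mul_assoc] at this ⊢
    exact this.symm
  have hBXS : B * X * S = B := by
    have := congrArg conjTranspose hSXB
    simpa only [conjTranspose_mul, hSh, hXh, hB.1.eq, ← mul_assoc] using this
  -- first identity : A - B X A = A X A
  have key1 : A - B * X * A = A * X * A := by
    have expand : S * X * A = A * X * A + B * X * A := by
      rw [hSdef, add_mul, add_mul]
    rw [hSXA] at expand
    rw [sub_eq_iff_eq_add]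
    exact expand
  -- second identity : B - B X A = B X B
  have key2 : B - B * X * A = B * X * B := by
    have expand : B * X * S = B * X * A + B * X * B := by
      rw [hSdef, mul_add]
    rw [hBXS] at expand
    rw [sub_eq_iff_eq_add, add_comm]
    exact expand
  constructor
  · rw [key1]
    have := hXpsd.conjTranspose_mul_mul_same A
    rwa [hA.1.eq] at this
  · rw [key2]
    have := hXpsd.conjTranspose_mul_mul_same B
    rwa [hB.1.eq] at this
end

section
/- Abstract condition number bound (fictitious space / BDDC lemma): let Ŝ be a Hermitian positive definite operator on a finite-dimensional complex Hilbert space Ŵ, S̃ Hermitian positive definite on W̃, and E : W̃ → Ŵ a surjective linear map with a right inverse R : Ŵ → W̃ (E R = I) such that (i) (S̃ R û, R û) ≤ (Ŝ û, û) for all û ∈ Ŵ, and (ii) (Ŝ E w̃, E w̃) ≤ C (S̃ w̃, w̃) for all w̃ ∈ W̃. Then all eigenvalues λ of M⁻¹Ŝ with M⁻¹ = E S̃⁻¹ E^H satisfy 1 ≤ λ ≤ C, so the condition number κ(M⁻¹Ŝ) ≤ C. -/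
/-- Abstract BDDC condition number bound: if `E R = I`, `(St R û, R û) ≤ (Sh û, û)` and
`(Sh E w̃, E w̃) ≤ C (St w̃, w̃)`, then every eigenvalue `λ` of `M⁻¹ Sh = E St⁻¹ Eᴴ Sh`
satisfies `1 ≤ λ ≤ C` (in particular `λ` is real), so `κ(M⁻¹Sh) ≤ C`. -/
theorem bddc_condition_number_bound
    {Wh Wt : Type*}
    [NormedAddCommGroup Wh] [InnerProductSpace ℂ Wh] [FiniteDimensional ℂ Wh]
    [NormedAddCommGroup Wt] [InnerProductSpace ℂ Wt] [FiniteDimensional ℂ Wt]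
    (Sh : Wh →ₗ[ℂ] Wh) (St : Wt →ₗ[ℂ] Wt) (Stinv : Wt →ₗ[ℂ] Wt)
    (hShsym : ∀ u v : Wh, (inner ℂ (Sh u) v : ℂ) = inner ℂ u (Sh v))
    (hShpos : ∀ u : Wh, u ≠ 0 → 0 < (inner ℂ (Sh u) u : ℂ).re)
    (hStsym : ∀ u v : Wt, (inner ℂ (St u) v : ℂ) = inner ℂ u (St v))
    (hStpos : ∀ u : Wt, u ≠ 0 → 0 < (inner ℂ (St u) u : ℂ).re)
    (hStinv₁ : St ∘ₗ Stinv = LinearMap.id) (hStinv₂ : Stinv ∘ₗ St = LinearMap.id)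
    (E : Wt →ₗ[ℂ] Wh) (R : Wh →ₗ[ℂ] Wt) (hER : E ∘ₗ R = LinearMap.id)
    (C : ℝ) (hC : 1 ≤ C)
    (hstable : ∀ u : Wh, (inner ℂ (St (R u)) (R u) : ℂ).re ≤ (inner ℂ (Sh u) u : ℂ).re)
    (hbound : ∀ w : Wt, (inner ℂ (Sh (E w)) (E w) : ℂ).re ≤ C * (inner ℂ (St w) w : ℂ).re) :
    ∀ lam : ℂ,
      Module.End.HasEigenvalue
        ((E ∘ₗ Stinv ∘ₗ (LinearMap.adjoint E) ∘ₗ Sh : Wh →ₗ[ℂ] Wh) : Module.End ℂ Wh) lam →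
      lam.im = 0 ∧ 1 ≤ lam.re ∧ lam.re ≤ C := by
  intro lam hlam
  obtain ⟨u, hu⟩ := hlam.exists_hasEigenvector
  have hu0 : u ≠ 0 := hu.2
  have hTu : E (Stinv ((LinearMap.adjoint E) (Sh u))) = lam • u := by
    have := hu.apply_eq_smul
    simpa [LinearMap.comp_apply] using this
  set w : Wt := Stinv ((LinearMap.adjoint E) (Sh u)) with hw
  have hStw : St w = (LinearMap.adjoint E) (Sh u) := by
    have := congrArg (fun f => f ((LinearMap.adjoint E) (Sh u))) hStinv₁
    simpa [LinearMap.comp_apply] using this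
  -- nonnegativity of St form
  have hStnn : ∀ x : Wt, 0 ≤ (inner ℂ (St x) x : ℂ).re := by
    intro x
    by_cases hx : x = 0
    · simp [hx]
    · exact le_of_lt (hStpos x hx)
  set s : ℂ := inner ℂ (Sh u) u with hs
  have hsre : 0 < s.re := hShpos u hu0
  have hsim : s.im = 0 := by
    have : (starRingEnd ℂ) s = s := by
      rw [hs, inner_conj_symm, ← hShsym]
    have := congrArg Complex.im this
    simp at this
    linarith [this]
  set a : ℂ := inner ℂ (St w) w with ha
  have haim : a.im = 0 := by
    have : (starRingEnd ℂ) a = a := by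
      rw [ha, inner_conj_symm, ← hStsym]
    have := congrArg Complex.im this
    simp at this
    linarith [this]
  -- key identity : lam * s = a
  have hkey : lam * s = a := by
    have h1 : (inner ℂ (Sh u) (E w) : ℂ) = inner ℂ (St w) w := by
      rw [← LinearMap.adjoint_inner_left, ← hStw]
    have h2 : (inner ℂ (Sh u) (E w) : ℂ) = lam * s := by
      rw [hTu, inner_smul_right, hs]
    rw [ha, ← h1, h2]
  -- ⟨St w, R u⟩ = s
  have hcross : (inner ℂ (St w) (R u) : ℂ) = s := by
    rw [hStw, LinearMap.adjoint_inner_left]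
    have : E (R u) = u := by
      have := congrArg (fun f => f u) hER
      simpa [LinearMap.comp_apply] using this
    rw [this, hs]
  have hcross' : (inner ℂ (St (R u)) w : ℂ).re = s.re := by
    have : (inner ℂ (St (R u)) w : ℂ) = (starRingEnd ℂ) (inner ℂ (St w) (R u) : ℂ) := by
      rw [hStsym, inner_conj_symm]
    rw [this, hcross]
    simp
  -- lower bound: a.re ≥ s.re
  have hlow : s.re ≤ a.re := by
    have h0 : 0 ≤ (inner ℂ (St (w - R u)) (w - R u) : ℂ).re := hStnn _
    have hexp : (inner ℂ (St (w - R u)) (w - R u) : ℂ)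
        = inner ℂ (St w) w - inner ℂ (St w) (R u) - inner ℂ (St (R u)) w
          + inner ℂ (St (R u)) (R u) := by
      simp [map_sub, inner_sub_left, inner_sub_right]
      ring
    rw [hexp] at h0
    have hst := hstable u
    simp only [Complex.sub_re, Complex.add_re] at h0
    rw [← ha, hcross, hcross'] at h0
    rw [← hs] at hst
    linarith
  have hlamim : lam.im = 0 := by
    have := congrArg Complex.im hkey
    simp [Complex.mul_im, hsim, haim] at this
    rcases this with h | h
    · exact h
    · exact absurd h (ne_of_gt hsre)
  have hlamre : lam.re * s.re = a.re := by
    have := congrArg Complex.re hkey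
    simpa [Complex.mul_re, hsim, hlamim] using this
  have hlam1 : 1 ≤ lam.re := by
    nlinarith
  refine ⟨hlamim, hlam1, ?_⟩
  -- upper bound
  have hb := hbound w
  have hEw : (inner ℂ (Sh (E w)) (E w) : ℂ).re = lam.re * lam.re * s.re := by
    rw [hTu]
    have : (inner ℂ (Sh (lam • u)) (lam • u) : ℂ)
        = (starRingEnd ℂ) lam * (lam * s) := by
      rw [map_smul, inner_smul_left, inner_smul_right, hs]
    rw [this]
    simp [Complex.mul_re, Complex.mul_im, hlamim, hsim, Complex.conj_re, Complex.conj_im]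
    ring
  rw [hEw, ← ha] at hb
  rw [← hlamre] at hb
  have hlampos : 0 < lam.re * s.re := by nlinarith
  nlinarith
end

section
/- Jump operator bound: let a_r (r = 1,…,N) be Hermitian positive semi-definite sesquilinear forms and suppose for each r an element w^(r) decomposes as a sum over at most C_F interface components, with each pair of components across an interface satisfying the local estimate |w_D^{k,r}|²_{a_r} + |w̃_D^{k,j}|²_{a_j} ≤ Θ |w̄_k^{(r)}|²_{a_r} where |w̄_k^{(r)}|²_{a_r} ≤ |w^(r)|²_{a_r} (energy-minimal extension bound). Then Σ_r |Σ_{k} (w_D^{k,r} − w̃_D^{k,r})|²_{a_r} ≤ 2 C_F² Θ Σ_r |w^(r)|²_{a_r}. -/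
section Aux
variable {V : Type*} [AddCommGroup V] [Module ℂ V]

lemma polar_aux (A : V →ₗ⋆[ℂ] V →ₗ[ℂ] ℂ)
    (hH : ∀ v w : V, A v w = starRingEnd ℂ (A w v))
    (hP : ∀ v : V, 0 ≤ (A v v).re) (v w : V) :
    2 * (A v w).re ≤ (A v v).re + (A w w).re := by
  have h := hP (v - w)
  have hexp : A (v - w) (v - w) = A v v - A v w - A w v + A w w := by
    simp [map_sub, LinearMap.sub_apply]; ring
  have hre : (A w v).re = (A v w).re := by
    rw [hH v w]; simp [Complex.conj_re]
  rw [hexp] at h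
  simp only [Complex.add_re, Complex.sub_re] at h
  linarith

lemma sq_sum_le {ι : Type*} (A : V →ₗ⋆[ℂ] V →ₗ[ℂ] ℂ)
    (hH : ∀ v w : V, A v w = starRingEnd ℂ (A w v))
    (hP : ∀ v : V, 0 ≤ (A v v).re) (s : Finset ι) (f : ι → V) :
    (A (∑ k ∈ s, f k) (∑ k ∈ s, f k)).re ≤ s.card * ∑ k ∈ s, (A (f k) (f k)).re := by
  have hexp : A (∑ k ∈ s, f k) (∑ k ∈ s, f k) = ∑ i ∈ s, ∑ j ∈ s, A (f i) (f j) := by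
    rw [map_sum]
    simp only [LinearMap.sum_apply, map_sum]
    exact Finset.sum_comm
  rw [hexp]
  rw [Complex.re_sum]
  calc ∑ i ∈ s, (∑ j ∈ s, A (f i) (f j)).re
      = ∑ i ∈ s, ∑ j ∈ s, (A (f i) (f j)).re := by
        exact Finset.sum_congr rfl fun i _ => Complex.re_sum _ _
    _ ≤ ∑ i ∈ s, ∑ j ∈ s, ((A (f i) (f i)).re + (A (f j) (f j)).re) / 2 := by
        refine Finset.sum_le_sum fun i _ => Finset.sum_le_sum fun j _ => ?_
        have := polar_aux A hH hP (f i) (f j)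
        linarith
    _ = s.card * ∑ k ∈ s, (A (f k) (f k)).re := by
        have h1 : ∀ i ∈ s, ∑ j ∈ s, ((A (f i) (f i)).re + (A (f j) (f j)).re) / 2
            = ((s.card : ℝ) * (A (f i) (f i)).re + ∑ j ∈ s, (A (f j) (f j)).re) / 2 := by
          intro i _
          rw [← Finset.sum_div, Finset.sum_add_distrib, Finset.sum_const, nsmul_eq_mul]
        rw [Finset.sum_congr rfl h1, ← Finset.sum_div, Finset.sum_add_distrib,
          ← Finset.mul_sum, Finset.sum_const, nsmul_eq_mul]
        ring

end Aux

/-- Jump operator bound for the adaptive BDDC algorithm. Each subdomain `r` has at most `C_F`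
interfaces `k ∈ M r`; `b r k` denotes the cross energy `|w̃_D^{k,j}|²_{a_j}` of the interface
component measured in the neighboring subdomain, with the pairing symmetry
`Σ_{r,k} |w̃_D^{k,r}|²_{a_r} = Σ_{r,k} b r k`. Under the eigenvalue-based local estimate
`|w_D^{k,r}|²_{a_r} + |w̃_D^{k,j}|²_{a_j} ≤ Θ |wbar_k^{(r)}|²_{a_r}` and the energy-minimal
extension bound `Σ_{k∈M_r} |wbar_k^{(r)}|²_{a_r} ≤ C_F |w^{(r)}|²_{a_r}`, one has
`Σ_r |Σ_k (w_D^{k,r} − w̃_D^{k,r})|²_{a_r} ≤ 2 C_F² Θ Σ_r |w^{(r)}|²_{a_r}`. -/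
theorem jump_operator_bound {V : Type*} [AddCommGroup V] [Module ℂ V]
    (N K : ℕ) (a : Fin N → (V →ₗ⋆[ℂ] V →ₗ[ℂ] ℂ))
    (hHerm : ∀ r, ∀ v w : V, a r v w = starRingEnd ℂ (a r w v))
    (hPos : ∀ r, ∀ v : V, 0 ≤ (a r v v).re)
    (M : Fin N → Finset (Fin K)) (CF : ℕ) (hCF : ∀ r, (M r).card ≤ CF)
    (Θ : ℝ) (hΘ : 1 ≤ Θ)
    (wD wtD wbar : Fin N → Fin K → V) (w : Fin N → V)
    (b : Fin N → Fin K → ℝ) (hb : ∀ r k, 0 ≤ b r k)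
    (hsym : ∑ r, ∑ k ∈ M r, (a r (wtD r k) (wtD r k)).re = ∑ r, ∑ k ∈ M r, b r k)
    (heig : ∀ r, ∀ k ∈ M r,
      (a r (wD r k) (wD r k)).re + b r k ≤ Θ * (a r (wbar r k) (wbar r k)).re)
    (hmin : ∀ r, ∑ k ∈ M r, (a r (wbar r k) (wbar r k)).re ≤ (CF : ℝ) * (a r (w r) (w r)).re) :
    ∑ r, (a r (∑ k ∈ M r, (wD r k - wtD r k)) (∑ k ∈ M r, (wD r k - wtD r k))).re ≤
      2 * (CF : ℝ) ^ 2 * Θ * ∑ r, (a r (w r) (w r)).re := by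
  -- step 1: per-subdomain bound
  have step1 : ∀ r, (a r (∑ k ∈ M r, (wD r k - wtD r k)) (∑ k ∈ M r, (wD r k - wtD r k))).re
      ≤ (CF : ℝ) * ∑ k ∈ M r, ((a r (wD r k - wtD r k) (wD r k - wtD r k)).re) := by
    intro r
    refine le_trans (sq_sum_le (a r) (hHerm r) (hPos r) (M r) _) ?_
    have hnn : 0 ≤ ∑ k ∈ M r, (a r (wD r k - wtD r k) (wD r k - wtD r k)).re :=
      Finset.sum_nonneg fun k _ => hPos r _
    have : ((M r).card : ℝ) ≤ (CF : ℝ) := Nat.cast_le.mpr (hCF r)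
    nlinarith
  have step2 : ∀ r k, (a r (wD r k - wtD r k) (wD r k - wtD r k)).re
      ≤ 2 * ((a r (wD r k) (wD r k)).re + (a r (wtD r k) (wtD r k)).re) := by
    intro r k
    have hexp : a r (wD r k - wtD r k) (wD r k - wtD r k)
        = a r (wD r k) (wD r k) - a r (wD r k) (wtD r k) - a r (wtD r k) (wD r k)
          + a r (wtD r k) (wtD r k) := by
      simp [map_sub, LinearMap.sub_apply]; ring
    have hps := hPos r (wD r k + wtD r k)
    have hexp2 : a r (wD r k + wtD r k) (wD r k + wtD r k)
        = a r (wD r k) (wD r k) + a r (wD r k) (wtD r k) + a r (wtD r k) (wD r k)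
          + a r (wtD r k) (wtD r k) := by
      simp [map_add, LinearMap.add_apply]; ring
    rw [hexp2] at hps
    simp only [Complex.add_re] at hps
    have hre : (a r (wtD r k) (wD r k)).re = (a r (wD r k) (wtD r k)).re := by
      rw [hHerm r (wD r k) (wtD r k)]; simp [Complex.conj_re]
    rw [hexp]
    simp only [Complex.add_re, Complex.sub_re]
    linarith
  calc ∑ r, (a r (∑ k ∈ M r, (wD r k - wtD r k)) (∑ k ∈ M r, (wD r k - wtD r k))).re
      ≤ ∑ r, (CF : ℝ) * ∑ k ∈ M r, (a r (wD r k - wtD r k) (wD r k - wtD r k)).re :=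
        Finset.sum_le_sum fun r _ => step1 r
    _ ≤ ∑ r, (CF : ℝ) * ∑ k ∈ M r,
          2 * ((a r (wD r k) (wD r k)).re + (a r (wtD r k) (wtD r k)).re) := by
        refine Finset.sum_le_sum fun r _ => mul_le_mul_of_nonneg_left
          (Finset.sum_le_sum fun k _ => step2 r k) (Nat.cast_nonneg _)
    _ = 2 * (CF : ℝ) * (∑ r, ∑ k ∈ M r, (a r (wD r k) (wD r k)).re
          + ∑ r, ∑ k ∈ M r, (a r (wtD r k) (wtD r k)).re) := by
        rw [← Finset.sum_add_distrib, Finset.mul_sum]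
        refine Finset.sum_congr rfl fun r _ => ?_
        rw [← Finset.sum_add_distrib, Finset.mul_sum, Finset.mul_sum]
        refine Finset.sum_congr rfl fun k _ => by ring
    _ = 2 * (CF : ℝ) * ∑ r, ∑ k ∈ M r, ((a r (wD r k) (wD r k)).re + b r k) := by
        rw [hsym]
        congr 1
        rw [← Finset.sum_add_distrib]
        refine Finset.sum_congr rfl fun r _ => by rw [← Finset.sum_add_distrib]
    _ ≤ 2 * (CF : ℝ) * ∑ r, ∑ k ∈ M r, Θ * (a r (wbar r k) (wbar r k)).re := by
        refine mul_le_mul_of_nonneg_left (Finset.sum_le_sum fun r _ =>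
          Finset.sum_le_sum fun k hk => heig r k hk) (by positivity)
    _ ≤ 2 * (CF : ℝ) * ∑ r, Θ * ((CF : ℝ) * (a r (w r) (w r)).re) := by
        refine mul_le_mul_of_nonneg_left (Finset.sum_le_sum fun r _ => ?_) (by positivity)
        rw [← Finset.mul_sum]
        exact mul_le_mul_of_nonneg_left (hmin r) (by linarith)
    _ = 2 * (CF : ℝ) ^ 2 * Θ * ∑ r, (a r (w r) (w r)).re := by
        rw [Finset.mul_sum, Finset.mul_sum]
        refine Finset.sum_congr rfl fun r _ => by ring
end
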